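/- Let γ ≥ 1, s ∈ ℝ, and P⁺, P⁻ > 0 with P⁺ ≠ P⁻, and set d = sqrt( P⁺P⁻ · ((P⁺)^γ - (P⁻)^γ)/(P⁺ - P⁻) ) > 0. Then a pair (J⁺, J⁻) ∈ ℝ² satisfies the Rankine–Hugoniot conditions if and only if either J⁺ = sP⁺ + d and J⁻ = sP⁻ + d, or J⁺ = sP⁺ - d and J⁻ = sP⁻ - d. -/

import Mathlib

open Real

/-- Given end states `0 < P⁺ ≠ P⁻ > 0` and speed `s`, the momenta `(J⁺, J⁻)` satisfy the
Rankine–Hugoniot conditions if and only if `J± = sP± + d` or `J± = sP± - d`, where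
`d = √(P⁺P⁻·((P⁺)^γ-(P⁻)^γ)/(P⁺-P⁻))`. -/
theorem rankine_hugoniot_momenta_characterization
    (γ s Pp Pm : ℝ) (hγ : 1 ≤ γ) (hPp : 0 < Pp) (hPm : 0 < Pm) (hne : Pp ≠ Pm)
    (d : ℝ) (hd : d = Real.sqrt (Pp * Pm * ((Pp ^ γ - Pm ^ γ) / (Pp - Pm)))) :
    ∀ Jp Jm : ℝ,
      (Jp - Jm = s * (Pp - Pm) ∧
        (Jp ^ 2 / Pp + Pp ^ γ) - (Jm ^ 2 / Pm + Pm ^ γ) = s * (Jp - Jm)) ↔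
      ((Jp = s * Pp + d ∧ Jm = s * Pm + d) ∨ (Jp = s * Pp - d ∧ Jm = s * Pm - d)) := by
  have hγ0 : 0 < γ := lt_of_lt_of_le one_pos hγ
  have hsub : Pp - Pm ≠ 0 := sub_ne_zero.mpr hne
  have hE : 0 < (Pp ^ γ - Pm ^ γ) / (Pp - Pm) := by
    rcases hne.lt_or_gt with h | h
    · have : Pp ^ γ < Pm ^ γ := Real.rpow_lt_rpow hPp.le h hγ0
      exact div_pos_of_neg_of_neg (by linarith) (by linarith)
    · have : Pm ^ γ < Pp ^ γ := Real.rpow_lt_rpow hPm.le h hγ0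
      exact div_pos (by linarith) (by linarith)
  have hd0 : 0 ≤ d := hd ▸ Real.sqrt_nonneg _
  have hd2 : d ^ 2 = Pp * Pm * ((Pp ^ γ - Pm ^ γ) / (Pp - Pm)) := by
    rw [hd, Real.sq_sqrt]
    positivity
  have hd2' : d ^ 2 * (Pp - Pm) = Pp * Pm * (Pp ^ γ - Pm ^ γ) := by
    field_simp at hd2
    linarith [hd2]
  intro Jp Jm
  constructor
  · rintro ⟨h1, h2⟩
    have h2' : Jp ^ 2 * Pm - Jm ^ 2 * Pp + (Pp ^ γ - Pm ^ γ) * (Pp * Pm)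
        = s * (Jp - Jm) * (Pp * Pm) := by
      field_simp at h2
      linarith [h2]
    have key : ((Jp - s * Pp) - d) * ((Jp - s * Pp) + d) = 0 := by
      have hfac : ((Jp - s * Pp) ^ 2 - d ^ 2) * (Pp - Pm) = 0 := by
        have hJm : Jm = Jp - s * Pp + s * Pm := by linarith
        subst hJm
        nlinarith [h2', hd2']
      have := mul_eq_zero.mp hfac
      rcases this with h | h
      · nlinarith [h]
      · exact absurd h hsub
    rcases mul_eq_zero.mp key with h | h
    · left
      constructor
      · linarith
      · linarith
    · right
      constructor
      · linarith
      · linarith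
  · rintro (⟨h1, h2⟩ | ⟨h1, h2⟩) <;> subst h1 <;> subst h2 <;>
      constructor <;> try ring
    · field_simp
      linear_combination (-1 : ℝ) * hd2'
    · field_simp
      linear_combination (-1 : ℝ) * hd2'
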